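/- POD best-approximation property: let A ψ = Σ_{p=1}^P ⟨f_p, ψ⟩ f_p with orthonormal eigenvectors v¹, ..., v^K of A associated to eigenvalues λ₁ ≥ λ₂ ≥ ... ≥ λ_K ≥ 0, and let V_l = span(v¹,...,v^l). Then for any subspace W_l of H of dimension at most l, Σ_{p=1}^P dist(f_p, V_l)² ≤ Σ_{p=1}^P dist(f_p, W_l)². -/

import Mathlib

open scoped RealInnerProductSpace

/-- Squared distance to the span of an orthonormal family. -/
lemma infDist_sq_span_orthonormal {H : Type*} [NormedAddCommGroup H]
    [InnerProductSpace ℝ H] [FiniteDimensional ℝ H]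
    {ι : Type*} [Fintype ι]
    {w : ι → H} (hw : Orthonormal ℝ w) (x : H) :
    (Metric.infDist x (Submodule.span ℝ (Set.range w) : Set H)) ^ 2
      = ‖x‖ ^ 2 - ∑ j, ⟪x, w j⟫ ^ 2 := by
  classical
  set V : Submodule ℝ H := Submodule.span ℝ (Set.range w) with hV
  set y : H := ∑ j, ⟪x, w j⟫ • w j with hy
  have hyV : y ∈ V := Submodule.sum_mem _ fun j _ =>
    Submodule.smul_mem _ _ (Submodule.subset_span ⟨j, rfl⟩)
  have hinner : ∀ i, ⟪y, w i⟫ = ⟪x, w i⟫ := fun i =>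
    hw.inner_left_fintype (fun j => ⟪x, w j⟫) i
  have horth : ∀ u ∈ V, ⟪x - y, u⟫ = 0 := by
    intro u hu
    induction hu using Submodule.span_induction with
    | mem u hu =>
        obtain ⟨i, rfl⟩ := hu
        rw [inner_sub_left, hinner, sub_self]
    | zero => exact inner_zero_right _
    | add u₁ u₂ _ _ h1 h2 => rw [inner_add_right, h1, h2, add_zero]
    | smul c u _ h => rw [real_inner_smul_right, h, mul_zero]
  have hproj : V.starProjection x = y :=
    Submodule.eq_starProjection_of_mem_of_inner_eq_zero hyV horth
  have hdist : Metric.infDist x (V : Set H) = ‖x - y‖ := by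
    rw [Metric.infDist_eq_iInf]
    simp_rw [dist_eq_norm]
    rw [← hproj]
    exact (Submodule.starProjection_minimal x).symm
  have hperp : ⟪y, x - y⟫ = 0 := by
    rw [real_inner_comm]; exact horth y hyV
  have hpyth : ‖x‖ ^ 2 = ‖y‖ ^ 2 + ‖x - y‖ ^ 2 := by
    have := norm_add_sq_real y (x - y)
    rw [hperp] at this
    simpa [add_sub_cancel] using this
  have hny : ‖y‖ ^ 2 = ∑ j, ⟪x, w j⟫ ^ 2 := by
    rw [← real_inner_self_eq_norm_sq]
    nth_rewrite 1 [hy]; nth_rewrite 1 [hy]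
    rw [hw.inner_sum]
    simp [sq]
  rw [hdist, hpyth, hny]
  ring

/-- Abel-summation style inequality: a decreasing nonnegative sequence paired
with weights in `[0,1]` of total mass at most `l` is maximized by the first `l`
weights equal to one. -/
lemma key_sum_ineq (K l : ℕ) (lam d : Fin K → ℝ)
    (hnn : ∀ m, 0 ≤ lam m) (hdec : ∀ m n : Fin K, m ≤ n → lam n ≤ lam m)
    (hd0 : ∀ m, 0 ≤ d m) (hd1 : ∀ m, d m ≤ 1) (hsum : ∑ m, d m ≤ (l : ℝ)) :
    ∑ m, lam m * d m ≤
      ∑ m ∈ Finset.univ.filter (fun m : Fin K => (m : ℕ) < l), lam m := by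
  classical
  set c : ℝ := if h : l < K then lam ⟨l, h⟩ else 0 with hc
  have hc0 : 0 ≤ c := by
    rw [hc]; split_ifs with h
    · exact hnn _
    · exact le_refl 0
  have hle : ∀ m : Fin K, (m : ℕ) < l → c ≤ lam m := by
    intro m hm
    rw [hc]; split_ifs with h
    · exact hdec m ⟨l, h⟩ (by simpa [Fin.le_def] using hm.le)
    · exact hnn m
  have hge : ∀ m : Fin K, ¬ (m : ℕ) < l → lam m ≤ c := by
    intro m hm
    have h : l < K := lt_of_le_of_lt (not_lt.1 hm) m.2
    rw [hc, dif_pos h]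
    exact hdec ⟨l, h⟩ m (by simpa [Fin.le_def] using not_lt.1 hm)
  set A : Finset (Fin K) := Finset.univ.filter (fun m : Fin K => (m : ℕ) < l) with hA
  have hsplit := Finset.sum_filter_add_sum_filter_not Finset.univ
    (fun m : Fin K => (m : ℕ) < l) (fun m => lam m * d m)
  have hsplitd := Finset.sum_filter_add_sum_filter_not Finset.univ
    (fun m : Fin K => (m : ℕ) < l) d
  have h1 : ∑ m ∈ A, lam m * d m ≤ ∑ m ∈ A, (lam m - c + c * d m) := by
    refine Finset.sum_le_sum fun m hm => ?_
    have hm' : (m : ℕ) < l := (Finset.mem_filter.1 hm).2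
    have := mul_le_mul_of_nonneg_right (hle m hm') (sub_nonneg.2 (hd1 m))
    nlinarith [hle m hm']
  have h2 : ∑ m ∈ Finset.univ.filter (fun m : Fin K => ¬ (m : ℕ) < l), lam m * d m ≤
      ∑ m ∈ Finset.univ.filter (fun m : Fin K => ¬ (m : ℕ) < l), c * d m := by
    refine Finset.sum_le_sum fun m hm => ?_
    exact mul_le_mul_of_nonneg_right (hge m (Finset.mem_filter.1 hm).2) (hd0 m)
  have hcard : c * ((∑ m, d m) - (A.card : ℝ)) ≤ 0 := by
    by_cases h : l < K
    · have : A = Finset.Iio (⟨l, h⟩ : Fin K) := by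
        ext m; simp [hA, Fin.lt_def]
      have hAcard : (A.card : ℝ) = l := by rw [this, Fin.card_Iio]
      rw [hAcard]
      exact mul_nonpos_of_nonneg_of_nonpos hc0 (by linarith)
    · simp [hc, dif_neg h]
  have hexp : ∑ m ∈ A, (lam m - c + c * d m) =
      ∑ m ∈ A, lam m - c * (A.card : ℝ) + c * ∑ m ∈ A, d m := by
    rw [Finset.sum_add_distrib, Finset.sum_sub_distrib, Finset.sum_const, ← Finset.mul_sum]
    ring
  have h2' : ∑ m ∈ Finset.univ.filter (fun m : Fin K => ¬ (m : ℕ) < l), c * d m =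
      c * ∑ m ∈ Finset.univ.filter (fun m : Fin K => ¬ (m : ℕ) < l), d m := by
    rw [Finset.mul_sum]
  calc ∑ m, lam m * d m
      = ∑ m ∈ A, lam m * d m +
        ∑ m ∈ Finset.univ.filter (fun m : Fin K => ¬ (m : ℕ) < l), lam m * d m := hsplit.symm
    _ ≤ (∑ m ∈ A, lam m - c * (A.card : ℝ) + c * ∑ m ∈ A, d m) +
        c * ∑ m ∈ Finset.univ.filter (fun m : Fin K => ¬ (m : ℕ) < l), d m := by
        rw [← hexp, ← h2']; exact add_le_add h1 h2
    _ = ∑ m ∈ A, lam m + c * ((∑ m, d m) - (A.card : ℝ)) := by rw [← hsplitd]; ring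
    _ ≤ ∑ m ∈ A, lam m := by linarith

/-- POD best-approximation property: the span V_l of the first l
eigenvectors of the POD operator (eigenvalues in decreasing order) minimizes the
mean-square distance of the snapshots among all subspaces of dimension ≤ l. -/
theorem pod_best_approximation
    (H : Type*) [NormedAddCommGroup H] [InnerProductSpace ℝ H]
    [FiniteDimensional ℝ H] (K P l : ℕ) (hK : Module.finrank ℝ H = K)
    (f : Fin P → H) (v : Fin K → H) (lam : Fin K → ℝ)
    (hon : Orthonormal ℝ v)
    (heig : ∀ m, (∑ p, ⟪f p, v m⟫ • f p) = lam m • v m)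
    (hnn : ∀ m, 0 ≤ lam m)
    (hdec : ∀ m n : Fin K, m ≤ n → lam n ≤ lam m)
    (W : Submodule ℝ H) (hW : Module.finrank ℝ W ≤ l) :
    ∑ p, (Metric.infDist (f p)
        ((Submodule.span ℝ (v '' {m | (m : ℕ) < l}) : Submodule ℝ H) : Set H)) ^ 2 ≤
      ∑ p, (Metric.infDist (f p) (W : Set H)) ^ 2 := by
  classical
  -- the orthonormal basis given by `v`
  have hcardK : Fintype.card (Fin K) = Module.finrank ℝ H := by simp [hK]
  have hspan : Submodule.span ℝ (Set.range v) = ⊤ :=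
    hon.linearIndependent.span_eq_top_of_card_eq_finrank' hcardK
  let b : OrthonormalBasis (Fin K) ℝ H := OrthonormalBasis.mk hon hspan.ge
  have hb : ∀ m, b m = v m := fun m => by simp [b]
  -- eigenvalue identity: ∑_p ⟪f p, v m⟫² = lam m
  have hlam : ∀ m, ∑ p, ⟪f p, v m⟫ ^ 2 = lam m := by
    intro m
    have h := congrArg (fun z => ⟪z, v m⟫) (heig m)
    simp only [sum_inner, real_inner_smul_left] at h
    rw [real_inner_self_eq_norm_sq, hon.1 m] at h
    simpa [sq] using h
  -- quadratic form identity: ∑_p ⟪f p, x⟫² = ∑_m lam m * ⟪v m, x⟫²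
  have hquad : ∀ x : H, ∑ p, ⟪f p, x⟫ ^ 2 = ∑ m, lam m * ⟪v m, x⟫ ^ 2 := by
    intro x
    have hx : ∑ m, ⟪v m, x⟫ • v m = x := by
      have := b.sum_repr' x
      simpa [hb] using this
    have hfx : ∀ p, ⟪f p, x⟫ = ∑ m, ⟪v m, x⟫ * ⟪f p, v m⟫ := by
      intro p
      conv_lhs => rw [← hx]
      rw [inner_sum]
      exact Finset.sum_congr rfl fun m _ => real_inner_smul_right _ _ _
    have hA : ∑ p, ⟪f p, x⟫ • f p = ∑ m, ⟪v m, x⟫ • (lam m • v m) := by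
      calc ∑ p, ⟪f p, x⟫ • f p
          = ∑ p, ∑ m, (⟪v m, x⟫ * ⟪f p, v m⟫) • f p := by
            refine Finset.sum_congr rfl fun p _ => ?_
            rw [hfx p, Finset.sum_smul]
        _ = ∑ m, ∑ p, (⟪v m, x⟫ * ⟪f p, v m⟫) • f p := Finset.sum_comm
        _ = ∑ m, ⟪v m, x⟫ • (lam m • v m) := by
            refine Finset.sum_congr rfl fun m _ => ?_
            rw [← heig m, Finset.smul_sum]
            refine Finset.sum_congr rfl fun p _ => ?_
            rw [smul_smul]
    calc ∑ p, ⟪f p, x⟫ ^ 2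
        = ⟪∑ p, ⟪f p, x⟫ • f p, x⟫ := by
          rw [sum_inner]
          exact Finset.sum_congr rfl fun p _ => by rw [real_inner_smul_left, sq]
      _ = ⟪∑ m, ⟪v m, x⟫ • (lam m • v m), x⟫ := by rw [hA]
      _ = ∑ m, lam m * ⟪v m, x⟫ ^ 2 := by
          rw [sum_inner]
          refine Finset.sum_congr rfl fun m _ => ?_
          rw [real_inner_smul_left, real_inner_smul_left, real_inner_comm]
          ring
  -- Parseval: ∑_m ⟪v m, x⟫² = ‖x‖²
  have hparseval : ∀ x : H, ∑ m, ⟪v m, x⟫ ^ 2 = ‖x‖ ^ 2 := by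
    intro x
    have := b.sum_inner_mul_inner x x
    rw [real_inner_self_eq_norm_sq] at this
    rw [← this]
    exact Finset.sum_congr rfl fun m _ => by rw [hb, real_inner_comm, sq]
  -- orthonormal family spanning W
  set r : ℕ := Module.finrank ℝ W with hr
  set w : Fin r → H := fun j => ((stdOrthonormalBasis ℝ W j : W) : H) with hwdef
  have hww : Orthonormal ℝ w :=
    (stdOrthonormalBasis ℝ W).orthonormal.comp_linearIsometry W.subtypeₗᵢ
  have hWspan : Submodule.span ℝ (Set.range w) = W := by
    have hcomp : w = W.subtype ∘ (stdOrthonormalBasis ℝ W) := rfl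
    rw [hcomp, Set.range_comp, Submodule.span_image]
    rw [← (stdOrthonormalBasis ℝ W).coe_toBasis, (stdOrthonormalBasis ℝ W).toBasis.span_eq,
      Submodule.map_subtype_top]
  -- orthonormal family spanning V_l
  have himg : v '' {m | (m : ℕ) < l} = Set.range (fun m : {m : Fin K // (m : ℕ) < l} => v m) :=
    Set.image_eq_range _ _
  have hvon : Orthonormal ℝ (fun m : {m : Fin K // (m : ℕ) < l} => v m) :=
    hon.comp _ Subtype.val_injective
  -- rewrite both sides with the distance formula
  have hLHS : ∀ p, (Metric.infDist (f p)
      ((Submodule.span ℝ (v '' {m | (m : ℕ) < l}) : Submodule ℝ H) : Set H)) ^ 2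
      = ‖f p‖ ^ 2 - ∑ m : {m : Fin K // (m : ℕ) < l}, ⟪f p, v m⟫ ^ 2 := by
    intro p
    rw [himg]
    exact infDist_sq_span_orthonormal hvon (f p)
  have hRHS : ∀ p, (Metric.infDist (f p) (W : Set H)) ^ 2
      = ‖f p‖ ^ 2 - ∑ j, ⟪f p, w j⟫ ^ 2 := by
    intro p
    rw [← hWspan]
    exact infDist_sq_span_orthonormal hww (f p)
  simp only [hLHS, hRHS]
  rw [Finset.sum_sub_distrib, Finset.sum_sub_distrib]
  apply sub_le_sub_left
  -- reduce to the key inequality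
  set d : Fin K → ℝ := fun m => ∑ j, ⟪v m, w j⟫ ^ 2 with hd
  have hRH2 : ∑ p, ∑ j, ⟪f p, w j⟫ ^ 2 = ∑ m, lam m * d m := by
    rw [Finset.sum_comm]
    calc ∑ j, ∑ p, ⟪f p, w j⟫ ^ 2
        = ∑ j, ∑ m, lam m * ⟪v m, w j⟫ ^ 2 :=
          Finset.sum_congr rfl fun j _ => hquad (w j)
      _ = ∑ m, ∑ j, lam m * ⟪v m, w j⟫ ^ 2 := Finset.sum_comm
      _ = ∑ m, lam m * d m := by
          refine Finset.sum_congr rfl fun m _ => ?_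
          rw [hd, Finset.mul_sum]
  have hLH2 : ∑ p, ∑ m : {m : Fin K // (m : ℕ) < l}, ⟪f p, v m⟫ ^ 2
      = ∑ m ∈ Finset.univ.filter (fun m : Fin K => (m : ℕ) < l), lam m := by
    rw [Finset.sum_comm]
    calc ∑ m : {m : Fin K // (m : ℕ) < l}, ∑ p, ⟪f p, (v m : H)⟫ ^ 2
        = ∑ m : {m : Fin K // (m : ℕ) < l}, lam m :=
          Finset.sum_congr rfl fun m _ => hlam m
      _ = ∑ m ∈ Finset.univ.filter (fun m : Fin K => (m : ℕ) < l), lam m :=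
          (Finset.sum_subtype _ (by simp) lam).symm
  rw [hRH2, hLH2]
  -- verify the hypotheses of the key inequality
  have hd0 : ∀ m, 0 ≤ d m := fun m => Finset.sum_nonneg fun j _ => sq_nonneg _
  have hd1 : ∀ m, d m ≤ 1 := by
    intro m
    have hbessel := hww.sum_inner_products_le (v m) (s := Finset.univ)
    rw [hon.1 m] at hbessel
    calc d m = ∑ j, ‖⟪w j, v m⟫‖ ^ 2 := by
          refine Finset.sum_congr rfl fun j _ => ?_
          rw [Real.norm_eq_abs, sq_abs, real_inner_comm]
      _ ≤ 1 ^ 2 := hbessel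
      _ = 1 := one_pow 2
  have hdsum : ∑ m, d m ≤ (l : ℝ) := by
    have : ∑ m, d m = (r : ℝ) := by
      rw [hd]
      calc ∑ m, ∑ j, ⟪v m, w j⟫ ^ 2
          = ∑ j, ∑ m, ⟪v m, w j⟫ ^ 2 := Finset.sum_comm
        _ = ∑ j : Fin r, ‖w j‖ ^ 2 :=
            Finset.sum_congr rfl fun j _ => hparseval (w j)
        _ = ∑ j : Fin r, (1 : ℝ) := by
            refine Finset.sum_congr rfl fun j _ => ?_
            rw [hww.1 j, one_pow]
        _ = (r : ℝ) := by simp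
    rw [this]
    exact_mod_cast hW
  exact key_sum_ineq K l lam d hnn hdec hd0 hd1 hdsum
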